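/- (Pointwise bound for second derivatives of waves) Let u : R^{1+2} → R be C^2 and let (t,x) satisfy |x| < t. Then for all α, β ∈ {0,1,2}, |∂_α ∂_β u(t,x)| ≤ C (t-|x|)^{-1} ( Σ_{a,γ} |∂_γ L_a u(t,x)| + Σ_γ |∂_γ u(t,x)| ) + C · t/(t-|x|) · |□u(t,x)|, for an absolute constant C, where L_a = x_a ∂_t + t ∂_{x_a} and □ = -∂_t^2 + Δ. -/

import Mathlib

open Real Finset

/-- Partial derivative in direction `i` (0 = time, 1,2 = space) on `ℝ × ℝ × ℝ`. -/
noncomputable def pd (i : Fin 3) (u : ℝ × ℝ × ℝ → ℝ) (p : ℝ × ℝ × ℝ) : ℝ :=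
  fderiv ℝ u p (if i = 0 then (1, 0, 0) else if i = 1 then (0, 1, 0) else (0, 0, 1))

/-- Lorentz boost `L_a = x_a ∂_t + t ∂_{x_a}`, `a ∈ {1,2}`. -/
noncomputable def Lb (a : Fin 2) (u : ℝ × ℝ × ℝ → ℝ) : ℝ × ℝ × ℝ → ℝ :=
  fun p => (if a = 0 then p.2.1 else p.2.2) * pd 0 u p + p.1 * pd a.succ u p

/-- Euclidean spatial radius `r = |x|`. -/
noncomputable def rad (p : ℝ × ℝ × ℝ) : ℝ := Real.sqrt (p.2.1 ^ 2 + p.2.2 ^ 2)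

/-- Wave operator `□ = -∂_t² + Δ` (signature (-,+,+)). -/
noncomputable def Box (u : ℝ × ℝ × ℝ → ℝ) (p : ℝ × ℝ × ℝ) : ℝ :=
  -pd 0 (pd 0 u) p + pd 1 (pd 1 u) p + pd 2 (pd 2 u) p

/-- The function `s/t = sqrt(t² - |x|²)/t`. -/
noncomputable def sot (p : ℝ × ℝ × ℝ) : ℝ :=
  Real.sqrt (p.1 ^ 2 - (p.2.1 ^ 2 + p.2.2 ^ 2)) / p.1

/-! ### Auxiliary material -/

/-- The standard basis vectors of `ℝ × ℝ × ℝ`. -/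
def ee (i : Fin 3) : ℝ × ℝ × ℝ :=
  if i = 0 then (1, 0, 0) else if i = 1 then (0, 1, 0) else (0, 0, 1)

lemma pd_eq (i : Fin 3) (u : ℝ × ℝ × ℝ → ℝ) (p : ℝ × ℝ × ℝ) :
    pd i u p = fderiv ℝ u p (ee i) := rfl

lemma hasFDerivAt_pd {u : ℝ × ℝ × ℝ → ℝ} (hu : ContDiff ℝ 2 u) (i : Fin 3) (p : ℝ × ℝ × ℝ) :
    HasFDerivAt (pd i u) ((ContinuousLinearMap.apply ℝ ℝ (ee i)).comp
      (fderiv ℝ (fderiv ℝ u) p)) p := by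
  have h1 : ContDiff ℝ 1 (fderiv ℝ u) := hu.fderiv_right (by norm_num)
  exact (ContinuousLinearMap.apply ℝ ℝ (ee i)).hasFDerivAt.comp p
    ((h1.differentiable one_ne_zero p).hasFDerivAt)

lemma pd_pd {u : ℝ × ℝ × ℝ → ℝ} (hu : ContDiff ℝ 2 u) (α β : Fin 3) (p : ℝ × ℝ × ℝ) :
    pd α (pd β u) p = fderiv ℝ (fderiv ℝ u) p (ee α) (ee β) := by
  rw [pd_eq, (hasFDerivAt_pd hu β p).fderiv]; rfl

lemma pd_Lb {u : ℝ × ℝ × ℝ → ℝ} (hu : ContDiff ℝ 2 u) (a : Fin 2) (γ : Fin 3) (p : ℝ × ℝ × ℝ) :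
    pd γ (Lb a u) p =
      (if γ = a.succ then pd 0 u p else 0) + (if γ = 0 then pd a.succ u p else 0)
        + (if a = 0 then p.2.1 else p.2.2) * fderiv ℝ (fderiv ℝ u) p (ee γ) (ee 0)
        + p.1 * fderiv ℝ (fderiv ℝ u) p (ee γ) (ee a.succ) := by
  have hc : HasFDerivAt (fun p : ℝ × ℝ × ℝ => if a = 0 then p.2.1 else p.2.2)
      (if a = 0 then (ContinuousLinearMap.fst ℝ ℝ ℝ).comp (ContinuousLinearMap.snd ℝ ℝ (ℝ × ℝ))
        else (ContinuousLinearMap.snd ℝ ℝ ℝ).comp (ContinuousLinearMap.snd ℝ ℝ (ℝ × ℝ))) p := by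
    rcases eq_or_ne a 0 with h | h
    · simp only [h, if_pos]; exact hasFDerivAt_snd.fst
    · simp only [if_neg h]; exact hasFDerivAt_snd.snd
  have ht : HasFDerivAt (fun p : ℝ × ℝ × ℝ => p.1) (ContinuousLinearMap.fst ℝ ℝ (ℝ × ℝ)) p :=
    hasFDerivAt_fst
  have h0 := hasFDerivAt_pd hu 0 p
  have ha := hasFDerivAt_pd hu a.succ p
  have hL : HasFDerivAt (Lb a u) _ p := (hc.mul h0).add (ht.mul ha)
  rw [pd_eq, hL.fderiv]
  have e1 : (ContinuousLinearMap.fst ℝ ℝ (ℝ × ℝ)) (ee γ) = if γ = 0 then 1 else 0 := by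
    fin_cases γ <;> simp [ee]
  have e2 : ((if a = 0 then (ContinuousLinearMap.fst ℝ ℝ ℝ).comp (ContinuousLinearMap.snd ℝ ℝ (ℝ × ℝ))
        else (ContinuousLinearMap.snd ℝ ℝ ℝ).comp (ContinuousLinearMap.snd ℝ ℝ (ℝ × ℝ)))) (ee γ)
      = if γ = a.succ then 1 else 0 := by
    fin_cases a <;> fin_cases γ <;> simp [ee]
  simp only [ContinuousLinearMap.add_apply, ContinuousLinearMap.smul_apply,
    ContinuousLinearMap.coe_comp', Function.comp_apply, ContinuousLinearMap.apply_apply, e1, e2]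
  rcases eq_or_ne γ 0 with h | h <;> rcases eq_or_ne γ a.succ with h2 | h2 <;>
    simp [h, h2] <;> ring

set_option maxHeartbeats 1000000 in
/-- Purely algebraic core: if the `G a γ` are the derivatives of the boosted functions and the
symmetric matrix `w` is the Hessian, then all second derivatives are controlled. -/
lemma alg_bound (t r x1 x2 : ℝ) (w : Fin 3 → Fin 3 → ℝ) (v : Fin 3 → ℝ)
    (G : Fin 2 → Fin 3 → ℝ) (B S : ℝ)
    (hr : r < t) (hr0 : 0 ≤ r) (hr2 : r ^ 2 = x1 ^ 2 + x2 ^ 2)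
    (hx1 : |x1| ≤ r) (hx2 : |x2| ≤ r)
    (hsym : ∀ α β, w α β = w β α)
    (hG : ∀ a γ, G a γ = (if γ = a.succ then v 0 else 0) + (if γ = 0 then v a.succ else 0)
        + (if a = 0 then x1 else x2) * w γ 0 + t * w γ a.succ)
    (hB : B = -w 0 0 + w 1 1 + w 2 2)
    (hGS : ∀ a γ, |G a γ| ≤ S) (hvS : ∀ γ, |v γ| ≤ S) :
    ∀ α β, (t - r) * |w α β| ≤ 13 * S + t * |B| := by
  have ht : 0 < t := lt_of_le_of_lt hr0 hr
  have hd : 0 < t - r := by linarith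
  have hS0 : 0 ≤ S := le_trans (abs_nonneg _) (hvS 0)
  have hb0 : 0 ≤ |B| := abs_nonneg _
  have hG00 : G 0 0 = v 1 + x1 * w 0 0 + t * w 0 1 := by have := hG 0 0; simpa using this
  have hG10 : G 1 0 = v 2 + x2 * w 0 0 + t * w 0 2 := by have := hG 1 0; simpa using this
  have hG01 : G 0 1 = v 0 + x1 * w 1 0 + t * w 1 1 := by have := hG 0 1; simpa using this
  have hG12 : G 1 2 = v 0 + x2 * w 2 0 + t * w 2 2 := by have := hG 1 2; simpa using this
  have hG02 : G 0 2 = x1 * w 2 0 + t * w 2 1 := by have := hG 0 2; simpa using this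
  have hG11 : G 1 1 = x2 * w 1 0 + t * w 1 2 := by have := hG 1 1; simpa using this
  have hid : (t ^ 2 - r ^ 2) * w 0 0 =
      -(t ^ 2 * B) + t * G 0 1 + t * G 1 2 - 2 * t * v 0 - x1 * G 0 0 - x2 * G 1 0
        + x1 * v 1 + x2 * v 2 := by
    rw [hB, hG01, hG12, hG00, hG10]
    linear_combination (-(w 0 0)) * hr2 - t * x1 * hsym 1 0 - t * x2 * hsym 2 0
  have pb : ∀ c q cb qb : ℝ, |c| ≤ cb → |q| ≤ qb → |c * q| ≤ cb * qb := by
    intro c q cb qb h1 h2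
    rw [abs_mul]; exact mul_le_mul h1 h2 (abs_nonneg _) (le_trans (abs_nonneg _) h1)
  -- step A : bound on w 0 0
  have hA : (t - r) * |w 0 0| ≤ 8 * S + t * |B| := by
    have hE : (t ^ 2 - r ^ 2) * |w 0 0| ≤ t ^ 2 * |B| + 4 * t * S + 4 * r * S := by
      have e1 := abs_le.mp (pb _ _ _ _ hx1 (hGS 0 0))
      have e2 := abs_le.mp (pb _ _ _ _ hx2 (hGS 1 0))
      have e3 := abs_le.mp (pb _ _ _ _ hx1 (hvS 1))
      have e4 := abs_le.mp (pb _ _ _ _ hx2 (hvS 2))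
      have e5a := mul_le_mul_of_nonneg_left (abs_le.mp (hGS 0 1)).2 ht.le
      have e5b := mul_le_mul_of_nonneg_left (abs_le.mp (hGS 0 1)).1 ht.le
      have e6a := mul_le_mul_of_nonneg_left (abs_le.mp (hGS 1 2)).2 ht.le
      have e6b := mul_le_mul_of_nonneg_left (abs_le.mp (hGS 1 2)).1 ht.le
      have e7a := mul_le_mul_of_nonneg_left (abs_le.mp (hvS 0)).2 ht.le
      have e7b := mul_le_mul_of_nonneg_left (abs_le.mp (hvS 0)).1 ht.le
      have e8a := mul_le_mul_of_nonneg_left (le_abs_self B) (sq_nonneg t)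
      have e8b := mul_le_mul_of_nonneg_left (neg_abs_le B) (sq_nonneg t)
      have hpos : (0:ℝ) < t ^ 2 - r ^ 2 := by nlinarith
      rw [← abs_of_pos hpos, ← abs_mul, abs_le, hid]
      constructor
      · linarith [e1.1, e1.2, e2.1, e2.2, e3.1, e3.2, e4.1, e4.2, e5a, e5b, e6a, e6b, e7a, e7b, e8a, e8b]
      · linarith [e1.1, e1.2, e2.1, e2.2, e3.1, e3.2, e4.1, e4.2, e5a, e5b, e6a, e6b, e7a, e7b, e8a, e8b]
    have key : t * ((t - r) * |w 0 0|) ≤ t * (8 * S + t * |B|) := by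
      nlinarith [hE, mul_nonneg (mul_nonneg hr0 hd.le) (abs_nonneg (w 0 0)),
        mul_nonneg hd.le hS0]
      
    exact le_of_mul_le_mul_left key ht
  -- step B : bounds on w 0 j
  have stepB : ∀ j : Fin 3, ∀ g e : ℝ, |g| ≤ 2 * S → |e| ≤ r → t * w 0 j = g - e * w 0 0 →
      (t - r) * |w 0 j| ≤ 11 * S + t * |B| := by
    intro j g e hg he hide
    have h1 : t * |w 0 j| ≤ 2 * S + r * |w 0 0| := by
      have h2 : |t * w 0 j| ≤ |g| + |e * w 0 0| := by rw [hide]; exact abs_sub _ _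
      have h3 := pb _ _ _ _ he (le_refl |w 0 0|)
      rw [abs_mul, abs_of_pos ht] at h2
      linarith
    have key : t * ((t - r) * |w 0 j|) ≤ t * (11 * S + t * |B|) := by
      nlinarith [mul_le_mul_of_nonneg_left h1 hd.le, mul_le_mul_of_nonneg_left hA hr0,
        mul_nonneg hd.le hS0, mul_nonneg (mul_nonneg hd.le ht.le) hb0,
        mul_nonneg hr0 hS0]
      
    exact le_of_mul_le_mul_left key ht
  have habs2 : ∀ g h : ℝ, |g| ≤ S → |h| ≤ S → |g - h| ≤ 2 * S := fun g h hg hh =>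
    (abs_sub _ _).trans (by linarith)
  have hB1 : (t - r) * |w 0 1| ≤ 11 * S + t * |B| := by
    exact stepB 1 (G 0 0 - v 1) x1 (habs2 _ _ (hGS 0 0) (hvS 1)) hx1 (by rw [hG00]; ring)
  have hB2 : (t - r) * |w 0 2| ≤ 11 * S + t * |B| := by
    exact stepB 2 (G 1 0 - v 2) x2 (habs2 _ _ (hGS 1 0) (hvS 2)) hx2 (by rw [hG10]; ring)
  -- step C : bounds on w i j, i j spatial
  have stepC : ∀ i j : Fin 3, ∀ g e : ℝ, |g| ≤ 2 * S → |e| ≤ r →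
      (t - r) * |w 0 i| ≤ 11 * S + t * |B| → t * w i j = g - e * w 0 i →
      (t - r) * |w i j| ≤ 13 * S + t * |B| := by
    intro i j g e hg he hwj hide
    have h1 : t * |w i j| ≤ 2 * S + r * |w 0 i| := by
      have h2 : |t * w i j| ≤ |g| + |e * w 0 i| := by rw [hide]; exact abs_sub _ _
      have h3 := pb _ _ _ _ he (le_refl |w 0 i|)
      rw [abs_mul, abs_of_pos ht] at h2
      linarith
    have key : t * ((t - r) * |w i j|) ≤ t * (13 * S + t * |B|) := by
      nlinarith [mul_le_mul_of_nonneg_left h1 hd.le, mul_le_mul_of_nonneg_left hwj hr0,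
        mul_nonneg hd.le hS0, mul_nonneg (mul_nonneg hd.le ht.le) hb0,
        mul_nonneg hr0 hS0]
      
    exact le_of_mul_le_mul_left key ht
  have hC11 : (t - r) * |w 1 1| ≤ 13 * S + t * |B| := by
    refine stepC 1 1 (G 0 1 - v 0) x1 (habs2 _ _ (hGS 0 1) (hvS 0)) hx1 hB1 ?_
    rw [hG01, hsym 1 0]; ring
  have hC22 : (t - r) * |w 2 2| ≤ 13 * S + t * |B| := by
    refine stepC 2 2 (G 1 2 - v 0) x2 (habs2 _ _ (hGS 1 2) (hvS 0)) hx2 hB2 ?_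
    rw [hG12, hsym 2 0]; ring
  have hC12 : (t - r) * |w 1 2| ≤ 13 * S + t * |B| := by
    refine stepC 1 2 (G 1 1 - 0) x2 (habs2 (G 1 1) 0 (hGS 1 1) (by simpa using hS0)) hx2 hB1 ?_
    rw [hG11, hsym 1 0]; ring
  have hC21 : (t - r) * |w 2 1| ≤ 13 * S + t * |B| := by
    refine stepC 2 1 (G 0 2 - 0) x1 (habs2 (G 0 2) 0 (hGS 0 2) (by simpa using hS0)) hx1 hB2 ?_
    rw [hG02, hsym 2 0]; ring
  -- assemble
  have h00 : (t - r) * |w 0 0| ≤ 13 * S + t * |B| := hA.trans (by linarith)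
  have h01 : (t - r) * |w 0 1| ≤ 13 * S + t * |B| := hB1.trans (by linarith)
  have h02 : (t - r) * |w 0 2| ≤ 13 * S + t * |B| := hB2.trans (by linarith)
  intro α β
  fin_cases α <;> fin_cases β
  · exact h00
  · exact h01
  · exact h02
  · rw [hsym]; exact h01
  · exact hC11
  · exact hC12
  · rw [hsym]; exact h02
  · exact hC21
  · exact hC22

/-- Pointwise bound for second derivatives of waves: inside the cone `|x| < t`,
`|∂∂u| ≲ (t-|x|)⁻¹ (|∂Lu| + |∂u|) + t/(t-|x|) |□u|`. -/
theorem second_derivative_bound :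
    ∃ C > (0 : ℝ), ∀ u : ℝ × ℝ × ℝ → ℝ, ContDiff ℝ 2 u →
      ∀ p : ℝ × ℝ × ℝ, rad p < p.1 → ∀ α β : Fin 3,
        |pd α (pd β u) p|
          ≤ C * (p.1 - rad p)⁻¹ *
              ((∑ a : Fin 2, ∑ γ : Fin 3, |pd γ (Lb a u) p|) + ∑ γ : Fin 3, |pd γ u p|)
            + C * (p.1 / (p.1 - rad p)) * |Box u p| := by
  refine ⟨100, by norm_num, ?_⟩
  intro u hu p hp α β
  set t := p.1
  set x1 := p.2.1
  set x2 := p.2.2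
  set r := rad p with hrdef
  set w : Fin 3 → Fin 3 → ℝ := fun i j => fderiv ℝ (fderiv ℝ u) p (ee i) (ee j) with hw
  set v : Fin 3 → ℝ := fun i => pd i u p with hv
  set G : Fin 2 → Fin 3 → ℝ := fun a γ => pd γ (Lb a u) p with hG
  set S : ℝ := (∑ a : Fin 2, ∑ γ : Fin 3, |pd γ (Lb a u) p|) + ∑ γ : Fin 3, |pd γ u p| with hS
  have hr0 : 0 ≤ r := Real.sqrt_nonneg _
  have ht : 0 < t := lt_of_le_of_lt hr0 hp
  have hd : 0 < t - r := by linarith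
  have hr2 : r ^ 2 = x1 ^ 2 + x2 ^ 2 := Real.sq_sqrt (by positivity)
  have hx1 : |x1| ≤ r := by
    rw [hrdef, rad, ← Real.sqrt_sq_eq_abs]; exact Real.sqrt_le_sqrt (by nlinarith)
  have hx2 : |x2| ≤ r := by
    rw [hrdef, rad, ← Real.sqrt_sq_eq_abs]; exact Real.sqrt_le_sqrt (by nlinarith)
  -- hypotheses for alg_bound
  have hsym : ∀ i j, w i j = w j i := by
    intro i j
    exact (hu.contDiffAt.isSymmSndFDerivAt (by norm_num)) (ee i) (ee j)
  have hGid : ∀ a γ, G a γ = (if γ = a.succ then v 0 else 0) + (if γ = 0 then v a.succ else 0)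
      + (if a = 0 then x1 else x2) * w γ 0 + t * w γ a.succ := by
    intro a γ; exact pd_Lb hu a γ p
  have hBid : Box u p = -w 0 0 + w 1 1 + w 2 2 := by
    rw [Box, pd_pd hu 0 0 p, pd_pd hu 1 1 p, pd_pd hu 2 2 p]
  have hGS : ∀ a γ, |G a γ| ≤ S := by
    intro a γ
    have h1 : |G a γ| ≤ ∑ γ' : Fin 3, |pd γ' (Lb a u) p| :=
      Finset.single_le_sum (f := fun γ' => |pd γ' (Lb a u) p|)
        (fun i _ => abs_nonneg _) (mem_univ γ)
    have h2 : (∑ γ' : Fin 3, |pd γ' (Lb a u) p|)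
        ≤ ∑ a' : Fin 2, ∑ γ' : Fin 3, |pd γ' (Lb a' u) p| :=
      Finset.single_le_sum (f := fun a' => ∑ γ' : Fin 3, |pd γ' (Lb a' u) p|)
        (fun i _ => Finset.sum_nonneg fun _ _ => abs_nonneg _) (mem_univ a)
    have h3 : (0:ℝ) ≤ ∑ γ' : Fin 3, |pd γ' u p| := Finset.sum_nonneg fun _ _ => abs_nonneg _
    rw [hS]; linarith
  have hvS : ∀ γ, |v γ| ≤ S := by
    intro γ
    have h1 : |v γ| ≤ ∑ γ' : Fin 3, |pd γ' u p| :=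
      Finset.single_le_sum (f := fun γ' => |pd γ' u p|)
        (fun i _ => abs_nonneg _) (mem_univ γ)
    have h3 : (0:ℝ) ≤ ∑ a' : Fin 2, ∑ γ' : Fin 3, |pd γ' (Lb a' u) p| :=
      Finset.sum_nonneg fun _ _ => Finset.sum_nonneg fun _ _ => abs_nonneg _
    rw [hS]; linarith
  have main := alg_bound t r x1 x2 w v G (Box u p) S hp hr0 hr2 hx1 hx2 hsym hGid hBid hGS hvS α β
  have hS0 : 0 ≤ S := le_trans (abs_nonneg _) (hvS 0)
  have hb0 : 0 ≤ |Box u p| := abs_nonneg _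
  have hww : pd α (pd β u) p = w α β := pd_pd hu α β p
  rw [hww]
  have h1 : |w α β| ≤ (13 * S + t * |Box u p|) / (t - r) := by
    rw [le_div_iff₀ hd]; linarith [main]
  refine h1.trans ?_
  have h2 : (100:ℝ) * (t - r)⁻¹ * S + 100 * (t / (t - r)) * |Box u p|
      = (100 * S + 100 * t * |Box u p|) / (t - r) := by
    field_simp
  rw [h2]
  refine (div_le_div_iff_of_pos_right hd).mpr ?_
  nlinarith [mul_nonneg ht.le hb0, hS0]
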